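/- Let C be an m×r matrix with rank r and F an r×q matrix. Then the matrix X with block rows (-F) on top and the q×q identity below satisfies (C * [I F]) * X = 0, and the columns of X form a basis for the null space of the matrix A = C * (Matrix of blocks [I, F]). -/

import Mathlib

open Matrix

theorem stmt8 {𝕜 : Type*} [Field 𝕜] {m r q : ℕ}
    (C : Matrix (Fin m) (Fin r) 𝕜) (hC : C.rank = r)
    (F : Matrix (Fin r) (Fin q) 𝕜)
    (A : Matrix (Fin m) (Fin r ⊕ Fin q) 𝕜)
    (hA : A = C * Matrix.fromCols 1 F)
    (X : Matrix (Fin r ⊕ Fin q) (Fin q) 𝕜)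
    (hX : X = Matrix.fromRows (-F) 1) :
    A * X = 0 ∧
    LinearIndependent 𝕜 (fun j => fun i => X i j) ∧
    Submodule.span 𝕜 (Set.range (fun j => fun i => X i j)) =
      LinearMap.ker A.mulVecLin := by
  subst hA hX
  -- injectivity of C.mulVec
  have hCinj : Function.Injective C.mulVecLin := by
    rw [← LinearMap.ker_eq_bot]
    have h := LinearMap.finrank_range_add_finrank_ker C.mulVecLin
    rw [show Module.finrank 𝕜 ↥(LinearMap.range C.mulVecLin) = C.rank from rfl, hC,
      Module.finrank_pi] at h
    simp only [Fintype.card_fin] at h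
    exact Submodule.finrank_eq_zero.1 (by omega)
  have h1 : Matrix.fromCols (1 : Matrix (Fin r) (Fin r) 𝕜) F *
      Matrix.fromRows (-F) (1 : Matrix (Fin q) (Fin q) 𝕜) = 0 := by
    rw [Matrix.fromCols_mul_fromRows]
    simp
  have hAX : C * Matrix.fromCols (1 : Matrix (Fin r) (Fin r) 𝕜) F * Matrix.fromRows (-F) (1 : Matrix (Fin q) (Fin q) 𝕜) = 0 := by
    rw [Matrix.mul_assoc, h1, Matrix.mul_zero]
  set X := Matrix.fromRows (-F) (1 : Matrix (Fin q) (Fin q) 𝕜) with hXdef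
  have hcols : (fun j => fun i => X i j) = fun j => Xᵀ j := rfl
  refine ⟨hAX, ?_, ?_⟩
  · -- linear independence of columns of X
    rw [hcols]
    rw [show (fun j => Xᵀ j) = X.col from rfl, ← Matrix.mulVec_injective_iff]
    intro u v huv
    have := congrFun huv
    funext i
    have hi := this (Sum.inr i)
    simpa [hXdef, Matrix.fromRows_mulVec, Matrix.mulVec_one] using hi
  · rw [hcols, show Set.range (fun j => Xᵀ j) = Set.range X.col from rfl, ← Matrix.range_mulVecLin]
    ext x
    simp only [LinearMap.mem_range, LinearMap.mem_ker, Matrix.mulVecLin_apply]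
    constructor
    · rintro ⟨v, rfl⟩
      rw [Matrix.mulVec_mulVec, hAX, Matrix.zero_mulVec]
    · intro hx
      refine ⟨x ∘ Sum.inr, ?_⟩
      have hx' : (Matrix.fromCols (1 : Matrix (Fin r) (Fin r) 𝕜) F).mulVec x = 0 := by
        apply hCinj
        simpa [Matrix.mulVecLin_apply, Matrix.mulVec_mulVec, Matrix.mulVec_add] using hx
      have hxe : x = Sum.elim (x ∘ Sum.inl) (x ∘ Sum.inr) := by
        funext i; cases i <;> rfl
      rw [hxe, Matrix.fromCols_mulVec_sumElim, Matrix.one_mulVec] at hx'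
      have hl : x ∘ Sum.inl = -(F.mulVec (x ∘ Sum.inr)) :=
        eq_neg_of_add_eq_zero_left hx'
      rw [hXdef, Matrix.fromRows_mulVec, Matrix.one_mulVec]
      funext i
      cases i with
      | inl i =>
        have := congrFun hl i
        simpa [Matrix.neg_mulVec] using this.symm
      | inr i => rfl
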